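/- arXiv:1805.00767 — 2 statements merged into one kernel-verified Lean document; each statement's English description precedes it below -/
import Mathlib

section
/- Let G'' be the group with generators a, b, c, d and relators ⁅a,c⁆, ⁅a,d⁆, ⁅b,c⁆, ⁅b,d⁆ and ⁅a,b⁆·⁅c,d⁆. Then G'' is isomorphic to the quotient of H(ℤ) × H(ℤ) by the diagonal copy Δ = {(Z^k, Z^k) : k ∈ ℤ} of the common center, via the map sending a ↦ (A,1), b ↦ (B,1), c ↦ (1,A), d ↦ (1,B). -/
/-- The Heisenberg group over a commutative ring `R`: `3 × 3` upper triangular matrices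
over `R` with all diagonal entries equal to `1`. -/
def Heisenberg (R : Type) [CommRing R] : Type :=
  {M : Matrix (Fin 3) (Fin 3) R //
    M 0 0 = 1 ∧ M 1 1 = 1 ∧ M 2 2 = 1 ∧ M 1 0 = 0 ∧ M 2 0 = 0 ∧ M 2 1 = 0}

namespace Heisenberg

variable {R : Type} [CommRing R]

instance : Mul (Heisenberg R) :=
  ⟨fun M N => ⟨M.1 * N.1, by
    obtain ⟨m1, m2, m3, m4, m5, m6⟩ := M.2
    obtain ⟨n1, n2, n3, n4, n5, n6⟩ := N.2
    refine ⟨?_, ?_, ?_, ?_, ?_, ?_⟩ <;>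
      simp [Matrix.mul_apply, Fin.sum_univ_three, m1, m2, m3, m4, m5, m6,
        n1, n2, n3, n4, n5, n6]⟩⟩

instance : One (Heisenberg R) := ⟨⟨1, by simp⟩⟩

instance : Inv (Heisenberg R) :=
  ⟨fun M => ⟨!![1, -M.1 0 1, M.1 0 1 * M.1 1 2 - M.1 0 2; 0, 1, -M.1 1 2; 0, 0, 1],
    ⟨rfl, rfl, rfl, rfl, rfl, rfl⟩⟩⟩

theorem mul_val (M N : Heisenberg R) : (M * N).1 = M.1 * N.1 := rfl
theorem one_val : (1 : Heisenberg R).1 = 1 := rfl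
theorem inv_val (M : Heisenberg R) :
    (M⁻¹).1 = !![1, -M.1 0 1, M.1 0 1 * M.1 1 2 - M.1 0 2; 0, 1, -M.1 1 2; 0, 0, 1] := rfl

instance : Group (Heisenberg R) where
  mul_assoc M N P := Subtype.ext (by rw [mul_val, mul_val, mul_val, mul_val, mul_assoc])
  one_mul M := Subtype.ext (by rw [mul_val, one_val, one_mul])
  mul_one M := Subtype.ext (by rw [mul_val, one_val, mul_one])
  inv_mul_cancel M := by
    obtain ⟨m1, m2, m3, m4, m5, m6⟩ := M.2
    apply Subtype.ext
    rw [mul_val, inv_val, one_val]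
    ext i j
    fin_cases i <;> fin_cases j <;>
      simp [Matrix.mul_apply, Fin.sum_univ_three, Matrix.one_apply,
        m1, m2, m3, m4, m5, m6] <;>
      ring

/-- The elementary unitriangular matrix with a `1` in position `(1,2)`. -/
def A : Heisenberg R := ⟨!![1, 1, 0; 0, 1, 0; 0, 0, 1], ⟨rfl, rfl, rfl, rfl, rfl, rfl⟩⟩

/-- The elementary unitriangular matrix with a `1` in position `(2,3)`. -/
def B : Heisenberg R := ⟨!![1, 0, 0; 0, 1, 1; 0, 0, 1], ⟨rfl, rfl, rfl, rfl, rfl, rfl⟩⟩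

/-- The generator of the center: the unitriangular matrix with a `1` in position `(1,3)`. -/
def Z : Heisenberg R := ⟨!![1, 0, 1; 0, 1, 0; 0, 0, 1], ⟨rfl, rfl, rfl, rfl, rfl, rfl⟩⟩

theorem Z_mem_center : (Z : Heisenberg R) ∈ Subgroup.center (Heisenberg R) := by
  rw [Subgroup.mem_center_iff]
  intro M
  obtain ⟨m1, m2, m3, m4, m5, m6⟩ := M.2
  apply Subtype.ext
  rw [mul_val, mul_val]
  ext i j
  fin_cases i <;> fin_cases j <;>
    simp [Z, Matrix.mul_apply, Fin.sum_univ_three, Matrix.vecHead, Matrix.vecTail,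
      m1, m2, m3, m4, m5, m6] <;> ring

-- new stuff
open scoped commutatorElement

def E (x y z : R) : Heisenberg R := ⟨!![1,x,z;0,1,y;0,0,1], ⟨rfl,rfl,rfl,rfl,rfl,rfl⟩⟩

theorem E_mul (x1 y1 z1 x2 y2 z2 : R) :
    E x1 y1 z1 * E x2 y2 z2 = E (x1+x2) (y1+y2) (z1+z2+x1*y2) := by
  apply Subtype.ext
  rw [mul_val]
  ext i j
  fin_cases i <;> fin_cases j <;>
    simp [E, Matrix.mul_apply, Fin.sum_univ_three, Matrix.vecHead, Matrix.vecTail] <;> ring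

theorem E_one : (E 0 0 0 : Heisenberg R) = 1 := by
  apply Subtype.ext
  rw [one_val]
  ext i j
  fin_cases i <;> fin_cases j <;> simp [E, Matrix.one_apply, Matrix.vecHead, Matrix.vecTail]

theorem eta (M : Heisenberg R) : M = E (M.1 0 1) (M.1 1 2) (M.1 0 2) := by
  obtain ⟨m1, m2, m3, m4, m5, m6⟩ := M.2
  apply Subtype.ext
  ext i j
  fin_cases i <;> fin_cases j <;> simp [E, Matrix.vecHead, Matrix.vecTail, m1, m2, m3, m4, m5, m6]

theorem zpow_eq_of_add {G : Type*} [Group G] (g : ℤ → G)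
    (hmul : ∀ m n, g (m+n) = g m * g n) (x : G) (hx : g 1 = x) (n : ℤ) : x ^ n = g n := by
  have h0 : g 0 = 1 := by
    have := hmul 0 0
    simp only [add_zero] at this
    exact (left_eq_mul.mp this)
  induction n using Int.induction_on with
  | zero => simp [h0]
  | succ k ih => rw [zpow_add_one, ih, ← hx, ← hmul]
  | pred k ih =>
      have h := hmul 1 (-1)
      rw [add_neg_cancel, h0, hx] at h
      have hinv : g (-1) = x⁻¹ := (inv_eq_of_mul_eq_one_right h.symm).symm
      rw [sub_eq_add_neg, zpow_add, ih, zpow_neg_one, ← hinv, ← hmul]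

theorem A_zpow (n : ℤ) : (A : Heisenberg ℤ) ^ n = E n 0 0 :=
  zpow_eq_of_add (fun n => E n 0 0) (by intro m n; rw [E_mul]; ring_nf) A rfl n

theorem B_zpow (n : ℤ) : (B : Heisenberg ℤ) ^ n = E 0 n 0 :=
  zpow_eq_of_add (fun n => E 0 n 0) (by intro m n; rw [E_mul]; ring_nf) B rfl n

theorem Z_zpow (n : ℤ) : (Z : Heisenberg ℤ) ^ n = E 0 0 n :=
  zpow_eq_of_add (fun n => E 0 0 n) (by intro m n; rw [E_mul]; ring_nf) Z rfl n

theorem decomp (M : Heisenberg ℤ) :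
    M = A ^ (M.1 0 1) * B ^ (M.1 1 2) * Z ^ (M.1 0 2 - M.1 0 1 * M.1 1 2) := by
  conv_lhs => rw [eta M]
  rw [A_zpow, B_zpow, Z_zpow, E_mul, E_mul]
  congr 1 <;> ring

theorem commutator_AB : ⁅(A : Heisenberg ℤ), B⁆ = (Z : Heisenberg ℤ) := by
  have hAi : (A : Heisenberg ℤ)⁻¹ = E (-1) 0 0 := by
    apply inv_eq_of_mul_eq_one_right
    show E 1 0 0 * E (-1) 0 0 = 1
    rw [E_mul]; simpa using E_one
  have hBi : (B : Heisenberg ℤ)⁻¹ = E 0 (-1) 0 := by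
    apply inv_eq_of_mul_eq_one_right
    show E 0 1 0 * E 0 (-1) 0 = 1
    rw [E_mul]; simpa using E_one
  rw [commutatorElement_def, hAi, hBi]
  show E 1 0 0 * E 0 1 0 * E (-1) 0 0 * E 0 (-1) 0 = E 0 0 1
  rw [E_mul, E_mul, E_mul]
  norm_num

end Heisenberg

section HeisMap

variable {G : Type*} [Group G] (α β ζ : G)

/-- auxiliary: powers conjugation lemma -/
theorem heis_conj_nat {u v w : G} (hwv : Commute w v) (h : v * u = w * (u * v)) :
    ∀ n : ℕ, v ^ n * u = w ^ n * (u * v ^ n) := by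
  intro n
  induction n with
  | zero => simp
  | succ k ih =>
      calc v ^ (k+1) * u = v ^ k * (v * u) := by rw [pow_succ']; group
        _ = v ^ k * w * (u * v) := by rw [h, mul_assoc]
        _ = w * v ^ k * (u * v) := by rw [(hwv.pow_right k).eq]
        _ = w * (v ^ k * u) * v := by group
        _ = w * (w ^ k * (u * v ^ k)) * v := by rw [ih]
        _ = w ^ (k+1) * (u * v ^ (k+1)) := by rw [pow_succ, pow_succ']; group

theorem heis_conj {u v w : G} (hwu : Commute w u) (hwv : Commute w v)
    (h : v * u = w * (u * v)) (y : ℤ) : v ^ y * u = w ^ y * (u * v ^ y) := by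
  obtain ⟨n, rfl | rfl⟩ := Int.eq_nat_or_neg y
  · rw [zpow_natCast, zpow_natCast]
    exact heis_conj_nat hwv h n
  · rw [zpow_neg, zpow_neg, zpow_natCast, zpow_natCast, ← inv_pow, ← inv_pow]
    refine heis_conj_nat hwv.inv_inv ?_ n
    have : u * v = w⁻¹ * (v * u) := by rw [h]; group
    calc v⁻¹ * u = v⁻¹ * (u * v) * v⁻¹ := by group
      _ = v⁻¹ * (w⁻¹ * (v * u)) * v⁻¹ := by rw [this]
      _ = w⁻¹ * (v⁻¹ * v * u * v⁻¹) := by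
          rw [← mul_assoc, ← mul_assoc, (hwv.inv_inv.symm).eq]; group
      _ = w⁻¹ * (u * v⁻¹) := by group

theorem heis_swap (hζα : Commute ζ α) (hζβ : Commute ζ β) (hαβ : α * β = ζ * (β * α))
    (x y : ℤ) : β ^ y * α ^ x = ζ ^ (-(x * y)) * (α ^ x * β ^ y) := by
  have h1 : α ^ x * β = ζ ^ x * (β * α ^ x) := heis_conj hζβ hζα hαβ x
  have h2 : β * α ^ x = (ζ ^ x)⁻¹ * (α ^ x * β) := by rw [h1]; group
  have := heis_conj (u := α ^ x) (v := β) (w := (ζ ^ x)⁻¹)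
    ((hζα.zpow_left x).zpow_right x).inv_left (hζβ.zpow_left x).inv_left h2 y
  rw [this, ← zpow_neg, ← zpow_mul]
  ring_nf

def heisMap (M : Heisenberg ℤ) : G :=
  α ^ (M.1 0 1) * β ^ (M.1 1 2) * ζ ^ (M.1 0 2 - M.1 0 1 * M.1 1 2)

theorem entry01 (M N : Heisenberg ℤ) : (M * N).1 0 1 = M.1 0 1 + N.1 0 1 := by
  obtain ⟨m1, m2, m3, m4, m5, m6⟩ := M.2
  obtain ⟨n1, n2, n3, n4, n5, n6⟩ := N.2
  rw [Heisenberg.mul_val]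
  simp [Matrix.mul_apply, Fin.sum_univ_three, m1, n2, m4, m5, m6, n4, n5, n6]
  ring

theorem entry12 (M N : Heisenberg ℤ) : (M * N).1 1 2 = M.1 1 2 + N.1 1 2 := by
  obtain ⟨m1, m2, m3, m4, m5, m6⟩ := M.2
  obtain ⟨n1, n2, n3, n4, n5, n6⟩ := N.2
  rw [Heisenberg.mul_val]
  simp [Matrix.mul_apply, Fin.sum_univ_three, m2, n3, m4, m5, m6, n4, n5, n6]
  ring

theorem entry02 (M N : Heisenberg ℤ) :
    (M * N).1 0 2 = M.1 0 2 + N.1 0 2 + M.1 0 1 * N.1 1 2 := by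
  obtain ⟨m1, m2, m3, m4, m5, m6⟩ := M.2
  obtain ⟨n1, n2, n3, n4, n5, n6⟩ := N.2
  rw [Heisenberg.mul_val]
  simp [Matrix.mul_apply, Fin.sum_univ_three, m1, n3, m4, m5, m6, n4, n5, n6]
  ring

theorem heis_gamma_mul (hζα : Commute ζ α) (hζβ : Commute ζ β)
    (hαβ : α * β = ζ * (β * α)) (x1 y1 k1 x2 y2 k2 : ℤ) :
    (α ^ x1 * β ^ y1 * ζ ^ k1) * (α ^ x2 * β ^ y2 * ζ ^ k2) =
      α ^ (x1 + x2) * β ^ (y1 + y2) * ζ ^ (k1 + k2 - x2 * y1) := by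
  have cα : ∀ m x : ℤ, ζ ^ m * α ^ x = α ^ x * ζ ^ m :=
    fun m x => ((hζα.zpow_left m).zpow_right x).eq
  have cβ : ∀ m y : ℤ, ζ ^ m * β ^ y = β ^ y * ζ ^ m :=
    fun m y => ((hζβ.zpow_left m).zpow_right y).eq
  have swap := heis_swap α β ζ hζα hζβ hαβ x2 y1
  calc α ^ x1 * β ^ y1 * ζ ^ k1 * (α ^ x2 * β ^ y2 * ζ ^ k2)
      = α ^ x1 * (β ^ y1 * (ζ ^ k1 * α ^ x2) * β ^ y2) * ζ ^ k2 := by group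
    _ = α ^ x1 * (β ^ y1 * (α ^ x2 * ζ ^ k1) * β ^ y2) * ζ ^ k2 := by rw [cα k1 x2]
    _ = α ^ x1 * ((β ^ y1 * α ^ x2) * (ζ ^ k1 * β ^ y2)) * ζ ^ k2 := by group
    _ = α ^ x1 * ((β ^ y1 * α ^ x2) * (β ^ y2 * ζ ^ k1)) * ζ ^ k2 := by rw [cβ k1 y2]
    _ = α ^ x1 * ((ζ ^ (-(x2 * y1)) * (α ^ x2 * β ^ y1)) * (β ^ y2 * ζ ^ k1)) * ζ ^ k2 := by
        rw [swap]
    _ = (α ^ x1 * ζ ^ (-(x2 * y1))) * (α ^ x2 * (β ^ y1 * β ^ y2)) * (ζ ^ k1 * ζ ^ k2) := by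
        group
    _ = (ζ ^ (-(x2 * y1)) * α ^ x1) * (α ^ x2 * (β ^ y1 * β ^ y2)) * (ζ ^ k1 * ζ ^ k2) := by
        rw [cα (-(x2*y1)) x1]
    _ = (ζ ^ (-(x2 * y1)) * α ^ (x1 + x2)) * β ^ (y1 + y2) * ζ ^ (k1 + k2) := by
        rw [zpow_add α, zpow_add β, zpow_add ζ k1 k2]; group
    _ = (α ^ (x1 + x2) * ζ ^ (-(x2 * y1))) * β ^ (y1 + y2) * ζ ^ (k1 + k2) := by
        rw [cα (-(x2*y1)) (x1+x2)]
    _ = α ^ (x1 + x2) * (ζ ^ (-(x2 * y1)) * β ^ (y1 + y2)) * ζ ^ (k1 + k2) := by group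
    _ = α ^ (x1 + x2) * (β ^ (y1 + y2) * ζ ^ (-(x2 * y1))) * ζ ^ (k1 + k2) := by
        rw [cβ (-(x2*y1)) (y1+y2)]
    _ = α ^ (x1 + x2) * β ^ (y1 + y2) * ζ ^ (k1 + k2 - x2 * y1) := by
        rw [show k1 + k2 - x2 * y1 = -(x2*y1) + (k1 + k2) by ring, zpow_add ζ]; group

theorem heisMap_mul (hζα : Commute ζ α) (hζβ : Commute ζ β) (hαβ : α * β = ζ * (β * α))
    (M N : Heisenberg ℤ) :
    heisMap α β ζ (M * N) = heisMap α β ζ M * heisMap α β ζ N := by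
  unfold heisMap
  rw [entry01, entry12, entry02, heis_gamma_mul α β ζ hζα hζβ hαβ]
  congr 1
  ring

end HeisMap

section HeisMap2

variable {G : Type*} [Group G] (α β ζ : G)

theorem heisMap_A : heisMap α β ζ Heisenberg.A = α := by
  show α ^ (1:ℤ) * β ^ (0:ℤ) * ζ ^ ((0:ℤ) - 1 * 0) = α
  norm_num

theorem heisMap_B : heisMap α β ζ Heisenberg.B = β := by
  show α ^ (0:ℤ) * β ^ (1:ℤ) * ζ ^ ((0:ℤ) - 0 * 1) = β
  norm_num

theorem heisMap_Z : heisMap α β ζ Heisenberg.Z = ζ := by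
  show α ^ (0:ℤ) * β ^ (0:ℤ) * ζ ^ ((1:ℤ) - 0 * 0) = ζ
  norm_num

theorem heisMap_one : heisMap α β ζ 1 = 1 := by
  simp [heisMap, Heisenberg.one_val, Matrix.one_apply]

theorem heisMap_id (M : Heisenberg ℤ) :
    heisMap Heisenberg.A Heisenberg.B Heisenberg.Z M = M :=
  (Heisenberg.decomp M).symm

theorem hom_heisMap {H : Type*} [Group H] (g : G →* H) (M : Heisenberg ℤ) :
    g (heisMap α β ζ M) = heisMap (g α) (g β) (g ζ) M := by
  simp [heisMap, map_mul, map_zpow]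

theorem heisMap_commute {α' β' ζ' : G}
    (h1 : Commute α α') (h2 : Commute α β') (h3 : Commute α ζ')
    (h4 : Commute β α') (h5 : Commute β β') (h6 : Commute β ζ')
    (h7 : Commute ζ α') (h8 : Commute ζ β') (h9 : Commute ζ ζ')
    (M N : Heisenberg ℤ) : Commute (heisMap α β ζ M) (heisMap α' β' ζ' N) := by
  unfold heisMap
  exact (((((h1.zpow_zpow _ _).mul_right (h2.zpow_zpow _ _)).mul_right
    (h3.zpow_zpow _ _)).mul_left ((((h4.zpow_zpow _ _).mul_right
    (h5.zpow_zpow _ _)).mul_right (h6.zpow_zpow _ _)))).mul_left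
    ((((h7.zpow_zpow _ _).mul_right (h8.zpow_zpow _ _)).mul_right (h9.zpow_zpow _ _))))

end HeisMap2


open Heisenberg in
/-- The diagonal copy `Δ = {(Zᵏ, Zᵏ) : k ∈ ℤ}` of the common center in `H(ℤ) × H(ℤ)`. -/
def HeisDiag : Subgroup (Heisenberg ℤ × Heisenberg ℤ) := Subgroup.zpowers (Z, Z)

instance : HeisDiag.Normal := by
  have h1 : ∀ x : Heisenberg ℤ × Heisenberg ℤ, Commute x (Heisenberg.Z, Heisenberg.Z) := by
    intro x
    have hz := Subgroup.mem_center_iff.mp (Heisenberg.Z_mem_center (R := ℤ))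
    exact Prod.ext (hz x.1) (hz x.2)
  constructor
  intro n hn g
  obtain ⟨k, rfl⟩ := Subgroup.mem_zpowers_iff.mp hn
  rw [((h1 g).zpow_right k).eq, mul_assoc, mul_inv_cancel, mul_one]
  exact ⟨k, rfl⟩

/-- Generators `a`, `b`, `c`, `d` of `G''`. -/
def ga : FreeGroup (Fin 4) := FreeGroup.of 0
def gb : FreeGroup (Fin 4) := FreeGroup.of 1
def gc : FreeGroup (Fin 4) := FreeGroup.of 2
def gd : FreeGroup (Fin 4) := FreeGroup.of 3

open scoped commutatorElement in
/-- Relators of `G'' = ⟨a,b,c,d | ⁅a,c⁆, ⁅a,d⁆, ⁅b,c⁆, ⁅b,d⁆, ⁅a,b⁆·⁅c,d⁆⟩`. -/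
def G''rels : Set (FreeGroup (Fin 4)) :=
  {⁅ga, gc⁆, ⁅ga, gd⁆, ⁅gb, gc⁆, ⁅gb, gd⁆, ⁅ga, gb⁆ * ⁅gc, gd⁆}

-- auxiliary
open Heisenberg
open scoped commutatorElement

abbrev Qgrp := (Heisenberg ℤ × Heisenberg ℤ) ⧸ HeisDiag

theorem hABZ : (A : Heisenberg ℤ) * B * A⁻¹ * B⁻¹ = Z := commutator_AB

def qmap : Fin 4 → Qgrp :=
  ![QuotientGroup.mk (A, 1), QuotientGroup.mk (B, 1),
    QuotientGroup.mk (1, A), QuotientGroup.mk (1, B)]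

theorem mkZZ : (QuotientGroup.mk (Z, Z) : Qgrp) = 1 :=
  (QuotientGroup.eq_one_iff _).mpr (Subgroup.mem_zpowers _)

theorem qmap_rels : ∀ r ∈ G''rels, FreeGroup.lift qmap r = 1 := by
  have key : ∀ x y : Heisenberg ℤ,
      ⁅(QuotientGroup.mk (x, 1) : Qgrp),
        (QuotientGroup.mk ((1, y) : Heisenberg ℤ × Heisenberg ℤ) : Qgrp)⁆ = 1 := by
    intro x y
    rw [commutatorElement_eq_one_iff_commute]
    have : ((x, 1) : Heisenberg ℤ × Heisenberg ℤ) * (1, y) = (1, y) * (x, 1) := by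
      ext <;> simp
    calc (QuotientGroup.mk (x, 1) : Qgrp) *
          QuotientGroup.mk ((1, y) : Heisenberg ℤ × Heisenberg ℤ)
        = QuotientGroup.mk ((x,1) * (1,y)) := rfl
      _ = QuotientGroup.mk ((1,y) * (x,1)) := by rw [this]
      _ = _ := rfl
  have hab : ⁅(QuotientGroup.mk (A, 1) : Qgrp), (QuotientGroup.mk (B, 1) : Qgrp)⁆ =
      QuotientGroup.mk (Z, 1) := by
    have : (⁅((A,1) : Heisenberg ℤ × Heisenberg ℤ), (B,1)⁆) = ((Z, 1) : Heisenberg ℤ × Heisenberg ℤ) := by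
      ext
      · exact hABZ
      · simp [commutatorElement_def]
    calc ⁅(QuotientGroup.mk (A, 1) : Qgrp), (QuotientGroup.mk (B, 1) : Qgrp)⁆
        = QuotientGroup.mk ⁅((A,1) : Heisenberg ℤ × Heisenberg ℤ), (B,1)⁆ := rfl
      _ = _ := by rw [this]
  have hcd : ⁅(QuotientGroup.mk ((1, A) : Heisenberg ℤ × Heisenberg ℤ) : Qgrp), (QuotientGroup.mk ((1, B) : Heisenberg ℤ × Heisenberg ℤ) : Qgrp)⁆ =
      QuotientGroup.mk (1, Z) := by
    have : (⁅((1,A) : Heisenberg ℤ × Heisenberg ℤ), (1,B)⁆) = ((1, Z) : Heisenberg ℤ × Heisenberg ℤ) := by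
      ext
      · simp [commutatorElement_def]
      · exact hABZ
    calc ⁅(QuotientGroup.mk ((1, A) : Heisenberg ℤ × Heisenberg ℤ) : Qgrp), (QuotientGroup.mk ((1, B) : Heisenberg ℤ × Heisenberg ℤ) : Qgrp)⁆
        = QuotientGroup.mk ⁅((1,A) : Heisenberg ℤ × Heisenberg ℤ), (1,B)⁆ := rfl
      _ = _ := by rw [this]
  intro r hr
  simp only [G''rels, Set.mem_insert_iff, Set.mem_singleton_iff] at hr
  rcases hr with rfl | rfl | rfl | rfl | rfl
  · rw [map_commutatorElement]
    simpa [ga, gc, qmap] using key A A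
  · rw [map_commutatorElement]
    simpa [ga, gd, qmap] using key A B
  · rw [map_commutatorElement]
    simpa [gb, gc, qmap] using key B A
  · rw [map_commutatorElement]
    simpa [gb, gd, qmap] using key B B
  · rw [map_mul, map_commutatorElement, map_commutatorElement]
    have : FreeGroup.lift qmap ga = QuotientGroup.mk (A, 1) := by simp [ga, qmap]
    have : FreeGroup.lift qmap gb = QuotientGroup.mk (B, 1) := by simp [gb, qmap]
    simp only [ga, gb, gc, gd, FreeGroup.lift_apply_of]
    show ⁅qmap 0, qmap 1⁆ * ⁅qmap 2, qmap 3⁆ = 1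
    have e0 : qmap 0 = QuotientGroup.mk (A, 1) := rfl
    have e1 : qmap 1 = QuotientGroup.mk (B, 1) := rfl
    have e2 : qmap 2 = QuotientGroup.mk (1, A) := rfl
    have e3 : qmap 3 = QuotientGroup.mk (1, B) := rfl
    rw [e0, e1, e2, e3, hab, hcd]
    calc (QuotientGroup.mk (Z, 1) : Qgrp) *
          QuotientGroup.mk ((1, Z) : Heisenberg ℤ × Heisenberg ℤ)
        = QuotientGroup.mk ((Z, (1:Heisenberg ℤ)) * (1, Z)) := rfl
      _ = QuotientGroup.mk (Z, Z) := by rw [show ((Z, (1:Heisenberg ℤ)) * (1, Z)) = (Z,Z) by ext <;> simp]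
      _ = 1 := mkZZ

theorem Prel : ∀ r ∈ G''rels, (PresentedGroup.mk G''rels) r = 1 := fun _ hr =>
  (QuotientGroup.eq_one_iff _).mpr (Subgroup.subset_normalClosure hr)

namespace G''aux

abbrev P := PresentedGroup G''rels

noncomputable def pa : P := PresentedGroup.of 0
noncomputable def pb : P := PresentedGroup.of 1
noncomputable def pc : P := PresentedGroup.of 2
noncomputable def pd : P := PresentedGroup.of 3

theorem mk_of (i : Fin 4) :
    PresentedGroup.mk G''rels (FreeGroup.of i) = PresentedGroup.of i := rfl

theorem hac : Commute pa pc := by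
  rw [← commutatorElement_eq_one_iff_commute]
  have := Prel ⁅ga, gc⁆ (by simp [G''rels])
  rwa [map_commutatorElement] at this

theorem had : Commute pa pd := by
  rw [← commutatorElement_eq_one_iff_commute]
  have := Prel ⁅ga, gd⁆ (by simp [G''rels])
  rwa [map_commutatorElement] at this

theorem hbc : Commute pb pc := by
  rw [← commutatorElement_eq_one_iff_commute]
  have := Prel ⁅gb, gc⁆ (by simp [G''rels])
  rwa [map_commutatorElement] at this

theorem hbd : Commute pb pd := by
  rw [← commutatorElement_eq_one_iff_commute]
  have := Prel ⁅gb, gd⁆ (by simp [G''rels])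
  rwa [map_commutatorElement] at this

noncomputable def ζ₁ : P := ⁅pa, pb⁆
noncomputable def ζ₂ : P := ⁅pc, pd⁆

theorem h5 : ζ₁ * ζ₂ = 1 := by
  have := Prel (⁅ga, gb⁆ * ⁅gc, gd⁆) (by simp [G''rels])
  rwa [map_mul, map_commutatorElement, map_commutatorElement] at this

theorem hz1z2 : ζ₁ = ζ₂⁻¹ := eq_inv_of_mul_eq_one_left h5
theorem hz2z1 : ζ₂ = ζ₁⁻¹ := eq_inv_of_mul_eq_one_right h5

theorem caζ2 : Commute pa ζ₂ := by
  rw [ζ₂, commutatorElement_def]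
  exact ((hac.mul_right had).mul_right hac.inv_right).mul_right had.inv_right

theorem cbζ2 : Commute pb ζ₂ := by
  rw [ζ₂, commutatorElement_def]
  exact ((hbc.mul_right hbd).mul_right hbc.inv_right).mul_right hbd.inv_right

theorem ccζ1 : Commute pc ζ₁ := by
  rw [ζ₁, commutatorElement_def]
  exact ((hac.symm.mul_right hbc.symm).mul_right hac.symm.inv_right).mul_right
    hbc.symm.inv_right

theorem cdζ1 : Commute pd ζ₁ := by
  rw [ζ₁, commutatorElement_def]
  exact ((had.symm.mul_right hbd.symm).mul_right had.symm.inv_right).mul_right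
    hbd.symm.inv_right

theorem cζ1a : Commute ζ₁ pa := by rw [hz1z2]; exact caζ2.symm.inv_left
theorem cζ1b : Commute ζ₁ pb := by rw [hz1z2]; exact cbζ2.symm.inv_left
theorem cζ2c : Commute ζ₂ pc := by rw [hz2z1]; exact ccζ1.symm.inv_left
theorem cζ2d : Commute ζ₂ pd := by rw [hz2z1]; exact cdζ1.symm.inv_left
theorem cζ1ζ2 : Commute ζ₁ ζ₂ := by rw [hz1z2]; exact (Commute.refl ζ₂).inv_left

theorem hab1 : pa * pb = ζ₁ * (pb * pa) := by rw [ζ₁, commutatorElement_def]; group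
theorem hcd1 : pc * pd = ζ₂ * (pd * pc) := by rw [ζ₂, commutatorElement_def]; group

noncomputable def f1 : Heisenberg ℤ → P := heisMap pa pb ζ₁
noncomputable def f2 : Heisenberg ℤ → P := heisMap pc pd ζ₂

theorem f1f2comm (M N : Heisenberg ℤ) : Commute (f1 M) (f2 N) :=
  heisMap_commute pa pb ζ₁ hac had caζ2 hbc hbd cbζ2 ccζ1.symm cdζ1.symm cζ1ζ2 M N

noncomputable def ψ0 : Heisenberg ℤ × Heisenberg ℤ →* P :=
  MonoidHom.mk' (fun p => f1 p.1 * f2 p.2) (by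
    intro p q
    show f1 (p.1 * q.1) * f2 (p.2 * q.2) = f1 p.1 * f2 p.2 * (f1 q.1 * f2 q.2)
    rw [show f1 (p.1 * q.1) = f1 p.1 * f1 q.1 from
        heisMap_mul pa pb ζ₁ cζ1a cζ1b hab1 p.1 q.1,
      show f2 (p.2 * q.2) = f2 p.2 * f2 q.2 from
        heisMap_mul pc pd ζ₂ cζ2c cζ2d hcd1 p.2 q.2]
    exact ((f1f2comm q.1 p.2).symm.mul_mul_mul_comm _ _).symm)

theorem ψ0_ZZ : ψ0 (Z, Z) = 1 := by
  show f1 Z * f2 Z = 1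
  rw [f1, f2, heisMap_Z, heisMap_Z]
  exact h5

theorem ψ0_diag : ∀ x ∈ HeisDiag, ψ0 x = 1 := by
  intro x hx
  obtain ⟨k, rfl⟩ := Subgroup.mem_zpowers_iff.mp hx
  rw [map_zpow, ψ0_ZZ, one_zpow]

noncomputable def ψ : Qgrp →* P := QuotientGroup.lift HeisDiag ψ0 ψ0_diag

noncomputable def φ : P →* Qgrp := PresentedGroup.toGroup qmap_rels

theorem φ_of (i : Fin 4) : φ (PresentedGroup.of i) = qmap i := PresentedGroup.toGroup.of qmap_rels

theorem ψ_mk (x : Heisenberg ℤ × Heisenberg ℤ) : ψ (QuotientGroup.mk x) = ψ0 x := rfl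

theorem left_inv : ψ.comp φ = MonoidHom.id P := by
  apply PresentedGroup.ext
  intro x
  rw [MonoidHom.comp_apply, MonoidHom.id_apply, φ_of]
  fin_cases x
  · show ψ (QuotientGroup.mk (A, 1)) = pa
    rw [ψ_mk]
    show f1 A * f2 1 = pa
    rw [f1, f2, heisMap_A, heisMap_one]
    exact mul_one pa
  · show ψ (QuotientGroup.mk (B, 1)) = pb
    rw [ψ_mk]
    show f1 B * f2 1 = pb
    rw [f1, f2, heisMap_B, heisMap_one]
    exact mul_one pb
  · show ψ (QuotientGroup.mk (1, A)) = pc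
    rw [ψ_mk]
    show f1 1 * f2 A = pc
    rw [f1, f2, heisMap_A, heisMap_one]
    exact one_mul pc
  · show ψ (QuotientGroup.mk (1, B)) = pd
    rw [ψ_mk]
    show f1 1 * f2 B = pd
    rw [f1, f2, heisMap_B, heisMap_one]
    exact one_mul pd

end G''aux

namespace G''aux

noncomputable def g1 : Heisenberg ℤ →* Qgrp :=
  (QuotientGroup.mk' HeisDiag).comp (MonoidHom.inl (Heisenberg ℤ) (Heisenberg ℤ))

noncomputable def g2 : Heisenberg ℤ →* Qgrp :=
  (QuotientGroup.mk' HeisDiag).comp (MonoidHom.inr (Heisenberg ℤ) (Heisenberg ℤ))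

theorem hφf1 (M : Heisenberg ℤ) : φ (f1 M) = g1 M := by
  rw [f1, hom_heisMap pa pb ζ₁ φ M]
  have h1 : φ pa = g1 A := by rw [pa, φ_of]; rfl
  have h2 : φ pb = g1 B := by rw [pb, φ_of]; rfl
  have h3 : φ ζ₁ = g1 Z := by
    rw [ζ₁, map_commutatorElement, h1, h2, ← map_commutatorElement, commutator_AB]
  rw [h1, h2, h3, ← hom_heisMap A B Z g1 M, heisMap_id]

theorem hφf2 (N : Heisenberg ℤ) : φ (f2 N) = g2 N := by
  rw [f2, hom_heisMap pc pd ζ₂ φ N]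
  have h1 : φ pc = g2 A := by rw [pc, φ_of]; rfl
  have h2 : φ pd = g2 B := by rw [pd, φ_of]; rfl
  have h3 : φ ζ₂ = g2 Z := by
    rw [ζ₂, map_commutatorElement, h1, h2, ← map_commutatorElement, commutator_AB]
  rw [h1, h2, h3, ← hom_heisMap A B Z g2 N, heisMap_id]

theorem right_inv : φ.comp ψ = MonoidHom.id Qgrp := by
  apply QuotientGroup.monoidHom_ext
  apply MonoidHom.ext
  intro p
  obtain ⟨M, N⟩ := p
  show φ (ψ (QuotientGroup.mk (M, N))) = QuotientGroup.mk (M, N)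
  rw [ψ_mk]
  show φ (f1 M * f2 N) = QuotientGroup.mk (M, N)
  rw [map_mul, hφf1, hφf2]
  show QuotientGroup.mk (M, 1) * QuotientGroup.mk (1, N) = QuotientGroup.mk (M, N)
  calc (QuotientGroup.mk (M, 1) : Qgrp) *
        QuotientGroup.mk ((1, N) : Heisenberg ℤ × Heisenberg ℤ)
      = QuotientGroup.mk ((M, (1 : Heisenberg ℤ)) * (1, N)) := rfl
    _ = QuotientGroup.mk (M, N) := by
        rw [show ((M, (1 : Heisenberg ℤ)) * (1, N)) = (M, N) by ext <;> simp]

end G''aux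

open Heisenberg in
/-- `G''` is isomorphic to the quotient of `H(ℤ) × H(ℤ)` by the diagonal copy `Δ` of the
common center, via `a ↦ (A,1)`, `b ↦ (B,1)`, `c ↦ (1,A)`, `d ↦ (1,B)`. -/
theorem G''_iso_heisenberg_square_quotient :
    ∃ e : PresentedGroup G''rels ≃* (Heisenberg ℤ × Heisenberg ℤ) ⧸ HeisDiag,
      e (PresentedGroup.of 0) = QuotientGroup.mk (A, 1) ∧
      e (PresentedGroup.of 1) = QuotientGroup.mk (B, 1) ∧
      e (PresentedGroup.of 2) = QuotientGroup.mk (1, A) ∧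
      e (PresentedGroup.of 3) = QuotientGroup.mk (1, B) := by
  refine ⟨MonoidHom.toMulEquiv G''aux.φ G''aux.ψ G''aux.left_inv G''aux.right_inv,
    ?_, ?_, ?_, ?_⟩ <;>
    · rw [show ∀ x, (MonoidHom.toMulEquiv G''aux.φ G''aux.ψ G''aux.left_inv G''aux.right_inv) x
          = G''aux.φ x from fun _ => rfl]
      exact G''aux.φ_of _
end

section
/- Let G' be the group with generators a, b, c, d, e and relations a⁻¹ca = c, a⁻¹ea = e, a⁻¹da = c⁻¹dce, b⁻¹db = d, b⁻¹eb = e, b⁻¹cb = d⁻¹cde⁻¹. Then the assignments c ↦ c, e ↦ e, d ↦ c⁻¹dce (for a) and c ↦ d⁻¹cde⁻¹, d ↦ d, e ↦ e (for b) extend to automorphisms of the free group F₃ on c, d, e, determine an action θ of the free group F₂ on a, b on F₃ by automorphisms (with θ(a)⁻¹ and θ(b)⁻¹ being the above automorphisms), and G' is isomorphic to the semidirect product F₃ ⋊_θ F₂. -/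
/-- Generators `a`, `b`, `c`, `d`, `e` of `G'` as elements of the free group on five
letters (`a = 0`, `b = 1`, `c = 2`, `d = 3`, `e = 4`). -/
def wa : FreeGroup (Fin 5) := FreeGroup.of 0
def wb : FreeGroup (Fin 5) := FreeGroup.of 1
def wc : FreeGroup (Fin 5) := FreeGroup.of 2
def wd : FreeGroup (Fin 5) := FreeGroup.of 3
def we : FreeGroup (Fin 5) := FreeGroup.of 4

/-- Relators of `G' = ⟨a,b,c,d,e | a⁻¹ca = c, a⁻¹ea = e, a⁻¹da = c⁻¹dce,
b⁻¹db = d, b⁻¹eb = e, b⁻¹cb = d⁻¹cde⁻¹⟩`. -/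
def G'rels : Set (FreeGroup (Fin 5)) :=
  {wa⁻¹ * wc * wa * wc⁻¹,
   wa⁻¹ * we * wa * we⁻¹,
   wa⁻¹ * wd * wa * (wc⁻¹ * wd * wc * we)⁻¹,
   wb⁻¹ * wd * wb * wd⁻¹,
   wb⁻¹ * we * wb * we⁻¹,
   wb⁻¹ * wc * wb * (wd⁻¹ * wc * wd * we⁻¹)⁻¹}

namespace G'aux

open FreeGroup


abbrev F3 := FreeGroup (Fin 3)
abbrev F2 := FreeGroup (Fin 2)

def φaF : F3 →* F3 := FreeGroup.lift
  ![of 0, (of 0)⁻¹ * of 1 * of 0 * of 2, of 2]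
def ψaF : F3 →* F3 := FreeGroup.lift
  ![of 0, of 0 * of 1 * (of 2)⁻¹ * (of 0)⁻¹, of 2]
def φbF : F3 →* F3 := FreeGroup.lift
  ![(of 1)⁻¹ * of 0 * of 1 * (of 2)⁻¹, of 1, of 2]
def ψbF : F3 →* F3 := FreeGroup.lift
  ![of 1 * of 0 * of 2 * (of 1)⁻¹, of 1, of 2]

def φa : MulAut F3 := MonoidHom.toMulEquiv φaF ψaF
  (by ext i; fin_cases i <;> simp [φaF, ψaF] <;> group)
  (by ext i; fin_cases i <;> simp [φaF, ψaF] <;> group)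
def φb : MulAut F3 := MonoidHom.toMulEquiv φbF ψbF
  (by ext i; fin_cases i <;> simp [φbF, ψbF] <;> group)
  (by ext i; fin_cases i <;> simp [φbF, ψbF] <;> group)

def θ : F2 →* MulAut F3 := FreeGroup.lift ![φa⁻¹, φb⁻¹]

@[simp] lemma θa : θ (of 0) = φa⁻¹ := by simp [θ]
@[simp] lemma θb : θ (of 1) = φb⁻¹ := by simp [θ]

abbrev SDP := F3 ⋊[θ] F2

open SemidirectProduct

def fwdf : Fin 5 → SDP := ![inr (of 0), inr (of 1), inl (of 0), inl (of 1), inl (of 2)]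


@[simp] lemma φa_coe : ⇑φa = ⇑φaF := rfl
@[simp] lemma φa_inv_coe : ⇑(φa⁻¹) = ⇑ψaF := rfl
@[simp] lemma φb_coe : ⇑φb = ⇑φbF := rfl
@[simp] lemma φb_inv_coe : ⇑(φb⁻¹) = ⇑ψbF := rfl

lemma fwd_rels : ∀ r ∈ G'rels, FreeGroup.lift fwdf r = 1 := by
  intro r hr
  simp only [G'rels, Set.mem_insert_iff, Set.mem_singleton_iff] at hr
  have key : ∀ (g : F2) (n : F3), ((inr g)⁻¹ * inl n * inr g : SDP) = inl ((θ g)⁻¹ n) := by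
    intro g n; rw [inl_aut_inv, _root_.map_inv]
  rcases hr with h|h|h|h|h|h <;> subst h <;>
    simp only [wa, wb, wc, wd, we, _root_.map_mul, _root_.map_inv, FreeGroup.lift_apply_of, fwdf,
      Matrix.cons_val_zero, Matrix.cons_val_one, Matrix.head_cons, Matrix.cons_val_two,
      Matrix.tail_cons, Matrix.cons_val_three, Matrix.cons_val_four] <;>
    rw [key] <;>
    simp [θa, θb, φaF, φbF, ← _root_.map_mul, ← _root_.map_inv] <;>
    (rw [show (1 : SDP) = inl 1 from (_root_.map_one _).symm]; exact congrArg inl (by group))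

def toSDP : PresentedGroup G'rels →* SDP := PresentedGroup.toGroup fwd_rels

abbrev PG := PresentedGroup G'rels

def A : PG := PresentedGroup.of 0
def B : PG := PresentedGroup.of 1
def C : PG := PresentedGroup.of 2
def D : PG := PresentedGroup.of 3
def E : PG := PresentedGroup.of 4

lemma rels_one : ∀ r ∈ G'rels, PresentedGroup.mk G'rels r = 1 := fun r hr =>
  (QuotientGroup.eq_one_iff r).mpr (Subgroup.subset_normalClosure hr)

lemma mk_wa : PresentedGroup.mk G'rels wa = A := rfl
lemma mk_wb : PresentedGroup.mk G'rels wb = B := rfl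
lemma mk_wc : PresentedGroup.mk G'rels wc = C := rfl
lemma mk_wd : PresentedGroup.mk G'rels wd = D := rfl
lemma mk_we : PresentedGroup.mk G'rels we = E := rfl

lemma r1 : A⁻¹ * C * A = C := by
  have h := rels_one _ (show wa⁻¹ * wc * wa * wc⁻¹ ∈ G'rels by simp [G'rels])
  simp only [_root_.map_mul, _root_.map_inv, mk_wa, mk_wc] at h
  exact mul_inv_eq_one.mp h
lemma r2 : A⁻¹ * E * A = E := by
  have h := rels_one _ (show wa⁻¹ * we * wa * we⁻¹ ∈ G'rels by simp [G'rels])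
  simp only [_root_.map_mul, _root_.map_inv, mk_wa, mk_we] at h
  exact mul_inv_eq_one.mp h
lemma r3 : A⁻¹ * D * A = C⁻¹ * D * C * E := by
  have h := rels_one _ (show wa⁻¹ * wd * wa * (wc⁻¹ * wd * wc * we)⁻¹ ∈ G'rels by simp [G'rels])
  simp only [_root_.map_mul, _root_.map_inv, mk_wa, mk_wc, mk_wd, mk_we] at h
  exact mul_inv_eq_one.mp h
lemma r4 : B⁻¹ * D * B = D := by
  have h := rels_one _ (show wb⁻¹ * wd * wb * wd⁻¹ ∈ G'rels by simp [G'rels])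
  simp only [_root_.map_mul, _root_.map_inv, mk_wb, mk_wd] at h
  exact mul_inv_eq_one.mp h
lemma r5 : B⁻¹ * E * B = E := by
  have h := rels_one _ (show wb⁻¹ * we * wb * we⁻¹ ∈ G'rels by simp [G'rels])
  simp only [_root_.map_mul, _root_.map_inv, mk_wb, mk_we] at h
  exact mul_inv_eq_one.mp h
lemma r6 : B⁻¹ * C * B = D⁻¹ * C * D * E⁻¹ := by
  have h := rels_one _ (show wb⁻¹ * wc * wb * (wd⁻¹ * wc * wd * we⁻¹)⁻¹ ∈ G'rels by simp [G'rels])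
  simp only [_root_.map_mul, _root_.map_inv, mk_wb, mk_wc, mk_wd, mk_we] at h
  exact mul_inv_eq_one.mp h

lemma of_conj {G : Type*} [Group G] {a x y : G} (h : a⁻¹ * x * a = y) :
    x = a * y * a⁻¹ := by rw [← h]; group

def f₁ : F3 →* PG := FreeGroup.lift ![C, D, E]
def f₂ : F2 →* PG := FreeGroup.lift ![A, B]

@[simp] lemma f₁c : f₁ (FreeGroup.of 0) = C := by simp [f₁]
@[simp] lemma f₁d : f₁ (FreeGroup.of 1) = D := by simp [f₁]
@[simp] lemma f₁e : f₁ (FreeGroup.of 2) = E := by simp [f₁]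
@[simp] lemma f₂a : f₂ (FreeGroup.of 0) = A := by simp [f₂]
@[simp] lemma f₂b : f₂ (FreeGroup.of 1) = B := by simp [f₂]

lemma compat_a :
    f₁.comp (θ (FreeGroup.of 0)).toMonoidHom = (MulAut.conj (f₂ (FreeGroup.of 0))).toMonoidHom.comp f₁ := by
  ext i
  fin_cases i
  · show f₁ ((θ (FreeGroup.of 0)) (FreeGroup.of 0)) = MulAut.conj (f₂ (FreeGroup.of 0)) (f₁ (FreeGroup.of 0))
    rw [θa]
    simp only [φa_inv_coe, ψaF, FreeGroup.lift_apply_of, Matrix.cons_val_zero, f₁c, f₂a,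
      MulAut.conj_apply]
    exact of_conj r1
  · show f₁ ((θ (FreeGroup.of 0)) (FreeGroup.of 1)) = MulAut.conj (f₂ (FreeGroup.of 0)) (f₁ (FreeGroup.of 1))
    rw [θa]
    simp only [φa_inv_coe, ψaF, FreeGroup.lift_apply_of, Matrix.cons_val_zero, Matrix.cons_val_one,
      Matrix.head_cons, _root_.map_mul, _root_.map_inv, f₁c, f₁d, f₁e, f₂a, MulAut.conj_apply]
    refine of_conj ?_
    calc A⁻¹ * (C * D * E⁻¹ * C⁻¹) * A
        = (A⁻¹*C*A) * (A⁻¹*D*A) * (A⁻¹*E*A)⁻¹ * (A⁻¹*C*A)⁻¹ := by group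
      _ = C * (C⁻¹*D*C*E) * E⁻¹ * C⁻¹ := by rw [r1, r2, r3]
      _ = D := by group
  · show f₁ ((θ (FreeGroup.of 0)) (FreeGroup.of 2)) = MulAut.conj (f₂ (FreeGroup.of 0)) (f₁ (FreeGroup.of 2))
    rw [θa]
    simp only [φa_inv_coe, ψaF, FreeGroup.lift_apply_of, Matrix.cons_val_two, Matrix.tail_cons,
      Matrix.head_cons, f₁e, f₂a, MulAut.conj_apply]
    exact of_conj r2

lemma compat_b :
    f₁.comp (θ (FreeGroup.of 1)).toMonoidHom = (MulAut.conj (f₂ (FreeGroup.of 1))).toMonoidHom.comp f₁ := by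
  ext i
  fin_cases i
  · show f₁ ((θ (FreeGroup.of 1)) (FreeGroup.of 0)) = MulAut.conj (f₂ (FreeGroup.of 1)) (f₁ (FreeGroup.of 0))
    rw [θb]
    simp only [φb_inv_coe, ψbF, FreeGroup.lift_apply_of, Matrix.cons_val_zero, Matrix.cons_val_one,
      Matrix.head_cons, Matrix.cons_val_two, Matrix.tail_cons, _root_.map_mul, _root_.map_inv,
      f₁c, f₁d, f₁e, f₂b, MulAut.conj_apply]
    refine of_conj ?_
    calc B⁻¹ * (D * C * E * D⁻¹) * B
        = (B⁻¹*D*B) * (B⁻¹*C*B) * (B⁻¹*E*B) * (B⁻¹*D*B)⁻¹ := by group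
      _ = D * (D⁻¹*C*D*E⁻¹) * E * D⁻¹ := by rw [r4, r5, r6]
      _ = C := by group
  · show f₁ ((θ (FreeGroup.of 1)) (FreeGroup.of 1)) = MulAut.conj (f₂ (FreeGroup.of 1)) (f₁ (FreeGroup.of 1))
    rw [θb]
    simp only [φb_inv_coe, ψbF, FreeGroup.lift_apply_of, Matrix.cons_val_one, Matrix.head_cons,
      f₁d, f₂b, MulAut.conj_apply]
    exact of_conj r4
  · show f₁ ((θ (FreeGroup.of 1)) (FreeGroup.of 2)) = MulAut.conj (f₂ (FreeGroup.of 1)) (f₁ (FreeGroup.of 2))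
    rw [θb]
    simp only [φb_inv_coe, ψbF, FreeGroup.lift_apply_of, Matrix.cons_val_two, Matrix.tail_cons,
      Matrix.head_cons, f₁e, f₂b, MulAut.conj_apply]
    exact of_conj r5

lemma compat : ∀ g : F2,
    f₁.comp (θ g).toMonoidHom = (MulAut.conj (f₂ g)).toMonoidHom.comp f₁ := by
  intro g
  induction g using FreeGroup.induction_on with
  | C1 => ext n; simp
  | of x =>
    fin_cases x
    · exact compat_a
    · exact compat_b
  | inv_of x hx =>
    refine MonoidHom.ext fun n => ?_
    have h := DFunLike.congr_fun hx ((θ (of x)).symm n)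
    simp only [MonoidHom.comp_apply, MulEquiv.coe_toMonoidHom, MulAut.conj_apply,
      MulEquiv.apply_symm_apply] at h
    simp only [MonoidHom.comp_apply, MulEquiv.coe_toMonoidHom, _root_.map_inv,
      MulAut.inv_def, MulAut.conj_symm_apply]
    rw [h]; group
  | mul x y hx hy =>
    refine MonoidHom.ext fun n => ?_
    have h1 := DFunLike.congr_fun hx ((θ y) n)

    have h2 := DFunLike.congr_fun hy n
    simp only [MonoidHom.comp_apply, MulEquiv.coe_toMonoidHom, MulAut.conj_apply,
      _root_.map_mul, MulAut.mul_apply] at h1 h2 ⊢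
    rw [h1, h2]; group

def toPG : SDP →* PG := SemidirectProduct.lift f₁ f₂ compat

lemma h₁ : toPG.comp toSDP = MonoidHom.id PG := by
  ext x
  fin_cases x <;>
    simp [toSDP, toPG, fwdf, PresentedGroup.toGroup.of, A, B, C, D, E] <;> rfl

lemma h₂ : toSDP.comp toPG = MonoidHom.id SDP := by
  refine SemidirectProduct.hom_ext ?_ ?_
  · refine FreeGroup.ext_hom _ _ fun i => ?_
    fin_cases i <;>
      simp [toPG, f₁, C, D, E, toSDP, PresentedGroup.toGroup.of, fwdf]
  · refine FreeGroup.ext_hom _ _ fun i => ?_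
    fin_cases i <;>
      simp [toPG, f₂, A, B, toSDP, PresentedGroup.toGroup.of, fwdf]

def iso : PG ≃* SDP := MonoidHom.toMulEquiv toSDP toPG h₁ h₂


end G'aux

open G'aux in
/-- `G'` is a semidirect product `F₃ ⋊_θ F₂`: the assignments `c ↦ c, d ↦ c⁻¹dce, e ↦ e`
and `c ↦ d⁻¹cde⁻¹, d ↦ d, e ↦ e` extend to automorphisms `φa`, `φb` of the free group `F₃`
on `c = 0`, `d = 1`, `e = 2`; they determine an action `θ` of the free group `F₂` on
`a = 0`, `b = 1` by automorphisms of `F₃`, with `θ(a)⁻¹ = φa` and `θ(b)⁻¹ = φb`, and `G'`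
is isomorphic to `F₃ ⋊[θ] F₂`. -/
theorem G'_iso_semidirectProduct :
    ∃ φa φb : MulAut (FreeGroup (Fin 3)),
      φa (FreeGroup.of 0) = FreeGroup.of 0 ∧
      φa (FreeGroup.of 1) =
        (FreeGroup.of 0)⁻¹ * FreeGroup.of 1 * FreeGroup.of 0 * FreeGroup.of 2 ∧
      φa (FreeGroup.of 2) = FreeGroup.of 2 ∧
      φb (FreeGroup.of 0) =
        (FreeGroup.of 1)⁻¹ * FreeGroup.of 0 * FreeGroup.of 1 * (FreeGroup.of 2)⁻¹ ∧
      φb (FreeGroup.of 1) = FreeGroup.of 1 ∧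
      φb (FreeGroup.of 2) = FreeGroup.of 2 ∧
      ∃ θ : FreeGroup (Fin 2) →* MulAut (FreeGroup (Fin 3)),
        θ (FreeGroup.of 0) = φa⁻¹ ∧ θ (FreeGroup.of 1) = φb⁻¹ ∧
        Nonempty (PresentedGroup G'rels ≃* FreeGroup (Fin 3) ⋊[θ] FreeGroup (Fin 2)) := by
  refine ⟨φa, φb, ?_, ?_, ?_, ?_, ?_, ?_, θ, ?_, ?_, ⟨iso⟩⟩
  · simp [φa_coe, φaF]
  · simp [φa_coe, φaF]
  · simp [φa_coe, φaF]
  · simp [φb_coe, φbF]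
  · simp [φb_coe, φbF]
  · simp [φb_coe, φbF]
  · exact θa
  · exact θb
end
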